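/- Let α, β ∈ ℝ be such that 1, α, β are linearly independent over ℚ. Then for every point p ∈ (AddCircle (1:ℝ))³, the orbit {p + ((t : AddCircle 1), (α·t : AddCircle 1), (β·t : AddCircle 1)) : t ∈ ℝ} of the linear flow with direction (1, α, β) is dense in (AddCircle 1)³. -/

import Mathlib

open Set Filter

/-- integer relations among `1, α, β` are trivial -/
lemma rel_int {α β : ℝ} (h : LinearIndependent ℚ ![(1 : ℝ), α, β]) {m n k : ℤ}
    (hrel : (m : ℝ) + n * α + k * β = 0) : m = 0 ∧ n = 0 ∧ k = 0 := by
  have h2 := Fintype.linearIndependent_iff.mp h ![(m : ℚ), (n : ℚ), (k : ℚ)] ?_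
  · refine ⟨?_, ?_, ?_⟩
    · have := h2 0; simp at this; exact_mod_cast this
    · have := h2 1; simp at this; exact_mod_cast this
    · have := h2 2; simp at this; exact_mod_cast this
  · simp only [Fin.sum_univ_three, Matrix.cons_val_zero, Matrix.cons_val_one, Matrix.head_cons,
      Matrix.cons_val_two, Matrix.tail_cons, Rat.smul_def]
    push_cast
    linarith

/-- the subgroup `ℤ(-α,-β) + ℤ²` of `ℝ²` -/
def Egrp (α β : ℝ) : AddSubgroup (ℝ × ℝ) where
  carrier := {k | ∃ a b c : ℤ, k = (b - a * α, c - a * β)}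
  zero_mem' := ⟨0, 0, 0, by norm_num; rfl⟩
  add_mem' := by
    rintro x y ⟨a, b, c, rfl⟩ ⟨a', b', c', rfl⟩
    exact ⟨a + a', b + b', c + c', by push_cast; rw [Prod.mk_add_mk, Prod.mk.injEq]; constructor <;> ring⟩
  neg_mem' := by
    rintro x ⟨a, b, c, rfl⟩
    exact ⟨-a, -b, -c, by push_cast; rw [Prod.neg_mk, Prod.mk.injEq]; constructor <;> ring⟩

lemma fract_mem_Egrp (α β : ℝ) (n : ℕ) :
    (Int.fract (n * α), Int.fract (n * β)) ∈ Egrp α β :=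
  ⟨-n, -⌊(n : ℝ) * α⌋, -⌊(n : ℝ) * β⌋, by
    rw [Int.fract, Int.fract, Prod.mk.injEq]; push_cast; constructor <;> ring⟩

lemma fract_inj {α β : ℝ} (h : LinearIndependent ℚ ![(1 : ℝ), α, β]) :
    Function.Injective fun n : ℕ => ((Int.fract (n * α), Int.fract (n * β)) : ℝ × ℝ) := by
  intro n m hnm
  have h1 : Int.fract ((n : ℝ) * α) = Int.fract ((m : ℝ) * α) := congrArg Prod.fst hnm
  rw [Int.fract, Int.fract, sub_eq_sub_iff_sub_eq_sub] at h1
  -- (n - m) * α = ⌊nα⌋ - ⌊mα⌋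
  by_contra hne
  have hrel : ((⌊(m : ℝ) * α⌋ - ⌊(n : ℝ) * α⌋ : ℤ) : ℝ) + (((n : ℤ) - (m : ℤ)) : ℤ) * α + ((0 : ℤ) : ℝ) * β = 0 := by
    push_cast
    linarith
  have := (rel_int h hrel).2.1
  omega

lemma small_elements {α β : ℝ} (h : LinearIndependent ℚ ![(1 : ℝ), α, β]) :
    ∀ ε > 0, ∃ k ∈ Egrp α β, k ≠ 0 ∧ ‖k‖ < ε := by
  intro ε hε
  set x : ℕ → ℝ × ℝ := fun n => (Int.fract (n * α), Int.fract (n * β)) with hx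
  have hxb : ∀ n, x n ∈ Metric.closedBall (0 : ℝ × ℝ) 1 := by
    intro n
    rw [Metric.mem_closedBall, dist_zero_right, Prod.norm_def]
    simp only [Real.norm_eq_abs]
    rw [max_le_iff]
    constructor <;>
      rw [abs_le] <;>
      exact ⟨by linarith [Int.fract_nonneg ((n:ℝ) * α), Int.fract_nonneg ((n:ℝ) * β)],
        by linarith [Int.fract_lt_one ((n:ℝ) * α), Int.fract_lt_one ((n:ℝ) * β)]⟩
  obtain ⟨a, -, φ, hφ, hconv⟩ :=
    (isCompact_closedBall (0 : ℝ × ℝ) 1).tendsto_subseq hxb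
  rw [Metric.tendsto_atTop] at hconv
  obtain ⟨N, hN⟩ := hconv (ε / 2) (by linarith)
  refine ⟨x (φ (N + 1)) - x (φ N), ?_, ?_, ?_⟩
  · exact (Egrp α β).sub_mem (fract_mem_Egrp α β _) (fract_mem_Egrp α β _)
  · intro h0
    have : x (φ (N + 1)) = x (φ N) := by
      rwa [sub_eq_zero] at h0
    exact absurd (fract_inj h this) (Nat.ne_of_gt (hφ (Nat.lt_succ_self N)))
  · have d1 := hN N (le_refl N)
    have d2 := hN (N + 1) (by omega)
    calc ‖x (φ (N + 1)) - x (φ N)‖ = dist (x (φ (N + 1))) (x (φ N)) := (dist_eq_norm _ _).symm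
      _ ≤ dist (x (φ (N + 1))) a + dist a (x (φ N)) := dist_triangle _ _ _
      _ < ε / 2 + ε / 2 := by rw [dist_comm a]; exact add_lt_add d2 d1
      _ = ε := by ring

lemma exists_line (K : AddSubgroup (ℝ × ℝ)) (hK : IsClosed (K : Set (ℝ × ℝ)))
    (hs : ∀ ε > 0, ∃ k ∈ K, k ≠ 0 ∧ ‖k‖ < ε) :
    ∃ w : ℝ × ℝ, w ≠ 0 ∧ ∀ t : ℝ, t • w ∈ K := by
  have h' : ∀ n : ℕ, ∃ k, k ∈ K ∧ k ≠ 0 ∧ ‖k‖ < 1 / (n + 1) := by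
    intro n
    obtain ⟨k, hk1, hk2, hk3⟩ := hs (1 / (n + 1)) (by positivity)
    exact ⟨k, hk1, hk2, hk3⟩
  choose u hu hu0 hun using h'
  have hnorm : ∀ n, ‖u n‖ ≠ 0 := fun n => norm_ne_zero_iff.2 (hu0 n)
  have hnormpos : ∀ n, 0 < ‖u n‖ := fun n => norm_pos_iff.2 (hu0 n)
  set d : ℕ → ℝ × ℝ := fun n => ‖u n‖⁻¹ • u n with hd
  have hds : ∀ n, d n ∈ Metric.sphere (0 : ℝ × ℝ) 1 := by
    intro n
    rw [Metric.mem_sphere, dist_zero_right, hd]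
    rw [norm_smul, norm_inv, norm_norm, inv_mul_cancel₀ (hnorm n)]
  obtain ⟨w, hwmem, φ, hφ, hconv⟩ := (isCompact_sphere (0 : ℝ × ℝ) 1).tendsto_subseq hds
  have hw1 : ‖w‖ = 1 := by rwa [Metric.mem_sphere, dist_zero_right] at hwmem
  refine ⟨w, fun h0 => by simp [h0] at hw1, fun t => ?_⟩
  -- the norms of `u (φ n)` tend to zero
  have hvlim : Filter.Tendsto (fun n => ‖u (φ n)‖) Filter.atTop (nhds 0) := by
    apply squeeze_zero (fun n => (hnormpos _).le) (fun n => (hun (φ n)).le.trans ?_)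
      tendsto_one_div_add_atTop_nhds_zero_nat
    have := hφ.id_le n
    gcongr
    exact_mod_cast this
  -- the sequence of integer multiples
  have key : Filter.Tendsto (fun n => ((⌊t / ‖u (φ n)‖⌋ : ℝ)) • u (φ n))
      Filter.atTop (nhds (t • w)) := by
    have heq : ∀ n, ((⌊t / ‖u (φ n)‖⌋ : ℝ)) • u (φ n)
        = t • d (φ n) + ((⌊t / ‖u (φ n)‖⌋ : ℝ) - t / ‖u (φ n)‖) • u (φ n) := by
      intro n
      rw [hd]
      rw [smul_smul, sub_smul, div_eq_mul_inv]
      abel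
    rw [show nhds (t • w) = nhds (t • w + 0) by rw [add_zero]]
    simp only [heq]
    apply Filter.Tendsto.add
    · exact (hconv.const_smul t)
    · apply squeeze_zero_norm (a := fun n => ‖u (φ n)‖) (fun n => ?_) hvlim
      rw [norm_smul]
      apply mul_le_of_le_one_left (norm_nonneg _)
      rw [Real.norm_eq_abs, abs_sub_comm, Int.self_sub_floor, abs_of_nonneg (Int.fract_nonneg _)]
      exact (Int.fract_lt_one _).le
  -- closedness
  have hmem : ∀ n, ((⌊t / ‖u (φ n)‖⌋ : ℝ)) • u (φ n) ∈ K := by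
    intro n
    have : (⌊t / ‖u (φ n)‖⌋ : ℤ) • u (φ n) ∈ K := K.zsmul_mem (hu (φ n)) _
    rwa [Int.cast_smul_eq_zsmul ℝ] 
  exact hK.mem_of_tendsto key (Filter.Eventually.of_forall hmem)

lemma denseE {α β : ℝ} (h : LinearIndependent ℚ ![(1 : ℝ), α, β]) :
    Dense (Egrp α β : Set (ℝ × ℝ)) := by
  set K := (Egrp α β).topologicalClosure with hKdef
  have hKc : IsClosed (K : Set (ℝ × ℝ)) := AddSubgroup.isClosed_topologicalClosure _
  have hEK : (Egrp α β : Set (ℝ × ℝ)) ⊆ (K : Set (ℝ × ℝ)) :=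
    (Egrp α β).le_topologicalClosure
  have hcoe : (K : Set (ℝ × ℝ)) = closure ((Egrp α β : Set (ℝ × ℝ))) := rfl
  -- K contains a line
  obtain ⟨w, hw0, hwline⟩ := exists_line K hKc (by
    intro ε hε
    obtain ⟨k, hk1, hk2, hk3⟩ := small_elements h ε hε
    exact ⟨k, hEK hk1, hk2, hk3⟩)
  -- the linear functional killing the line
  set g : ℝ × ℝ → ℝ := fun k => w.2 * k.1 - w.1 * k.2 with hg
  set C : ℝ := w.1 ^ 2 + w.2 ^ 2 with hC
  have hCpos : 0 < C := by
    have h1 : w.1 ≠ 0 ∨ w.2 ≠ 0 := by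
      by_contra hcon
      push_neg at hcon
      exact hw0 (Prod.ext hcon.1 hcon.2)
    rcases h1 with h1 | h1 <;> positivity
  have hker : ∀ ζ : ℝ × ℝ, g ζ = 0 → ∃ t : ℝ, ζ = t • w := by
    intro ζ hζ
    have hζ' : w.2 * ζ.1 = w.1 * ζ.2 := by
      simp only [hg] at hζ; linarith
    by_cases hw1 : w.1 = 0
    · have hw2 : w.2 ≠ 0 := fun h2 => hw0 (Prod.ext hw1 h2)
      have h0 : ζ.1 = 0 := by
        rw [hw1, zero_mul] at hζ'
        rcases mul_eq_zero.1 hζ' with h' | h'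
        · exact absurd h' hw2
        · exact h'
      refine ⟨ζ.2 / w.2, Prod.ext ?_ ?_⟩
      · simp [h0, hw1]
      · simp only [Prod.smul_snd, smul_eq_mul]
        field_simp
    · refine ⟨ζ.1 / w.1, Prod.ext ?_ ?_⟩
      · simp only [Prod.smul_fst, smul_eq_mul]
        field_simp
      · simp only [Prod.smul_snd, smul_eq_mul]
        field_simp
        linarith [hζ']
  -- the image subgroup J = g '' K
  set J : AddSubgroup ℝ :=
    { carrier := g '' (K : Set (ℝ × ℝ))
      zero_mem' := ⟨0, K.zero_mem, by simp [hg]⟩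
      add_mem' := by
        rintro x y ⟨k, hk, rfl⟩ ⟨k', hk', rfl⟩
        exact ⟨k + k', K.add_mem hk hk', by simp only [hg, Prod.fst_add, Prod.snd_add]; ring⟩
      neg_mem' := by
        rintro x ⟨k, hk, rfl⟩
        exact ⟨-k, K.neg_mem hk, by simp only [hg, Prod.fst_neg, Prod.snd_neg]; ring⟩ } with hJ
  rcases J.dense_or_cyclic with hdense | ⟨c, hc⟩
  · -- dense case: K = univ
    have hKuniv : ∀ z : ℝ × ℝ, z ∈ (K : Set (ℝ × ℝ)) := by
      intro z
      rw [← hKc.closure_eq]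
      rw [Metric.mem_closure_iff]
      intro ε hε
      have hε' : 0 < ε * C / (‖w‖ + 1) := by positivity
      obtain ⟨y, hyJ, hy⟩ := Metric.mem_closure_iff.1 (hdense (g z)) _ hε'
      obtain ⟨k, hkK, rfl⟩ := hyJ
      set u : ℝ × ℝ := (w.2, -w.1) with hu
      set r : ℝ := (g z - g k) / C with hr
      have hgu : g u = C := by simp only [hg, hu, hC]; ring
      have hζ : g (z - k - r • u) = 0 := by
        simp only [hg, Prod.fst_sub, Prod.snd_sub, Prod.smul_fst, Prod.smul_snd,
          smul_eq_mul, hu, hr, hC]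
        field_simp [show w.1 ^ 2 + w.2 ^ 2 ≠ 0 from hCpos.ne']
        ring
      obtain ⟨t, ht⟩ := hker _ hζ
      refine ⟨k + t • w, K.add_mem hkK (hwline t), ?_⟩
      have hzeq : z - (k + t • w) = r • u := by
        have : z - k - r • u = t • w := ht
        rw [← this]; abel
      rw [dist_eq_norm, hzeq, norm_smul]
      have hun : ‖u‖ = ‖w‖ := by
        rw [Prod.norm_def, Prod.norm_def, hu, norm_neg]
        exact max_comm _ _
      have hrb : |r| < ε / (‖w‖ + 1) := by
        rw [hr, abs_div, abs_of_pos hCpos, div_lt_div_iff₀ hCpos (by positivity)]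
        calc |g z - g k| * (‖w‖ + 1) < (ε * C / (‖w‖ + 1)) * (‖w‖ + 1) := by
              apply mul_lt_mul_of_pos_right _ (by positivity)
              rwa [← Real.dist_eq]
          _ = ε * C := by field_simp
      rw [Real.norm_eq_abs, hun]
      calc |r| * ‖w‖ ≤ |r| * (‖w‖ + 1) := by nlinarith [abs_nonneg r, norm_nonneg w]
        _ < (ε / (‖w‖ + 1)) * (‖w‖ + 1) := by
            apply mul_lt_mul_of_pos_right hrb (by positivity)
        _ = ε := by field_simp
    rw [dense_iff_closure_eq, ← hcoe]
    exact Set.eq_univ_iff_forall.2 hKuniv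
  · -- cyclic case: contradiction with linear independence
    exfalso
    have hmem : ∀ x : ℝ × ℝ, x ∈ Egrp α β → g x ∈ J := fun x hx => ⟨x, hEK hx, rfl⟩
    have h1 : g (1, 0) ∈ J := hmem _ ⟨0, 1, 0, by norm_num⟩
    have h2 : g (0, 1) ∈ J := hmem _ ⟨0, 0, 1, by norm_num⟩
    have h3 : g (-α, -β) ∈ J := hmem _ ⟨1, 0, 0, by norm_num⟩
    rw [hc, AddSubgroup.mem_closure_singleton] at h1 h2 h3
    obtain ⟨n1, hn1⟩ := h1
    obtain ⟨n2, hn2⟩ := h2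
    obtain ⟨n3, hn3⟩ := h3
    simp only [hg] at hn1 hn2 hn3
    norm_num at hn1 hn2 hn3
    -- hn1 : n1 • c = w.2, hn2 : n2 • c = -w.1, hn3 : n3 • c = -(w.2*α) + w.1*β
    have hcne : c ≠ 0 := by
      intro hc0
      rw [hc0] at hn1 hn2
      simp at hn1 hn2
      exact hw0 (Prod.ext (by simp [← hn2]) (by simp [← hn1]))
    have hcomb' : ((n3 : ℤ) : ℝ) + ((n1 : ℤ) : ℝ) * α + ((n2 : ℤ) : ℝ) * β = 0 := by
      have hfac : c * (((n3 : ℤ) : ℝ) + ((n1 : ℤ) : ℝ) * α + ((n2 : ℤ) : ℝ) * β) = 0 := by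
        push_cast
        linear_combination hn3 + α * hn1 + β * hn2
      rcases mul_eq_zero.1 hfac with h' | h'
      · exact absurd h' hcne
      · exact h'
    obtain ⟨hm, hn, hk⟩ := rel_int h hcomb'
    rw [hn] at hn1
    rw [hk] at hn2
    simp at hn1 hn2
    exact hw0 (Prod.ext (by simp [← hn2]) (by simp [← hn1]))

lemma coe_int_addCircle (a : ℤ) : ((a : ℝ) : AddCircle (1 : ℝ)) = 0 := by
  rw [AddCircle.coe_eq_zero_iff]
  exact ⟨a, by simp⟩

/-- if `1, α, β` are linearly independent over `ℚ`, every orbit of the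
linear flow with direction `(1, α, β)` on the 3-torus `(ℝ/ℤ)³` is dense. -/
theorem linear_flow_T3_orbit_dense (α β : ℝ)
    (h : LinearIndependent ℚ ![(1 : ℝ), α, β])
    (p : AddCircle (1 : ℝ) × AddCircle (1 : ℝ) × AddCircle (1 : ℝ)) :
    Dense {q : AddCircle (1 : ℝ) × AddCircle (1 : ℝ) × AddCircle (1 : ℝ) |
      ∃ t : ℝ, q = p + ((t : AddCircle (1 : ℝ)), ((α * t : ℝ) : AddCircle (1 : ℝ)),
        ((β * t : ℝ) : AddCircle (1 : ℝ)))} := by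
  have hE := denseE h
  set G3 : Set (ℝ × ℝ × ℝ) :=
    {g | ∃ (t : ℝ) (a b c : ℤ), g = (t + a, α * t + b, β * t + c)} with hG3
  have hG3dense : Dense G3 := by
    intro z
    rw [Metric.mem_closure_iff]
    intro ε hε
    obtain ⟨y, hyE, hy⟩ :=
      Metric.mem_closure_iff.1 (hE (z.2.1 - α * z.1, z.2.2 - β * z.1)) ε hε
    obtain ⟨a, b, c, rfl⟩ := hyE
    refine ⟨((z.1 - a) + a, α * (z.1 - a) + b, β * (z.1 - a) + c),
      ⟨z.1 - a, a, b, c, rfl⟩, ?_⟩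
    rw [Prod.dist_eq] at hy ⊢
    rw [Prod.dist_eq]
    simp only
    have e1 : dist z.1 (z.1 - (a : ℝ) + a) = 0 := by
      rw [Real.dist_eq]
      ring_nf
      simp
    have e2 : dist z.2.1 (α * (z.1 - a) + b) = dist (z.2.1 - α * z.1) ((b : ℝ) - a * α) := by
      rw [Real.dist_eq, Real.dist_eq]
      congr 1
      ring
    have e3 : dist z.2.2 (β * (z.1 - a) + c) = dist (z.2.2 - β * z.1) ((c : ℝ) - a * β) := by
      rw [Real.dist_eq, Real.dist_eq]
      congr 1
      ring
    rw [e1, e2, e3]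
    rw [max_lt_iff]
    exact ⟨hε, hy⟩
  set Ψ : ℝ × ℝ × ℝ → AddCircle (1 : ℝ) × AddCircle (1 : ℝ) × AddCircle (1 : ℝ) :=
    fun x => p + ((x.1 : AddCircle (1 : ℝ)), ((x.2.1 : ℝ) : AddCircle (1 : ℝ)),
      ((x.2.2 : ℝ) : AddCircle (1 : ℝ))) with hΨ
  have hΨc : Continuous Ψ := by
    apply Continuous.add continuous_const
    exact ((AddCircle.continuous_mk' 1).comp continuous_fst).prodMk
      (((AddCircle.continuous_mk' 1).comp (continuous_fst.comp continuous_snd)).prodMk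
        ((AddCircle.continuous_mk' 1).comp (continuous_snd.comp continuous_snd)))
  have hΨs : Function.Surjective Ψ := by
    intro q
    obtain ⟨x1, hx1⟩ := Quotient.exists_rep (q - p).1
    obtain ⟨x2, hx2⟩ := Quotient.exists_rep (q - p).2.1
    obtain ⟨x3, hx3⟩ := Quotient.exists_rep (q - p).2.2
    refine ⟨(x1, x2, x3), ?_⟩
    simp only [hΨ]
    have : ((x1 : AddCircle (1:ℝ)), ((x2 : ℝ) : AddCircle (1:ℝ)), ((x3 : ℝ) : AddCircle (1:ℝ)))
        = q - p := by
      rw [Prod.ext_iff, Prod.ext_iff]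
      exact ⟨hx1, hx2, hx3⟩
    rw [this]
    abel
  have himg : Ψ '' G3 ⊆ {q : AddCircle (1 : ℝ) × AddCircle (1 : ℝ) × AddCircle (1 : ℝ) |
      ∃ t : ℝ, q = p + ((t : AddCircle (1 : ℝ)), ((α * t : ℝ) : AddCircle (1 : ℝ)),
        ((β * t : ℝ) : AddCircle (1 : ℝ)))} := by
    rintro - ⟨g, ⟨t, a, b, c, rfl⟩, rfl⟩
    refine ⟨t, ?_⟩
    simp only [hΨ]
    congr 1
    rw [Prod.ext_iff, Prod.ext_iff]
    refine ⟨?_, ?_, ?_⟩ <;>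
      · push_cast
        rw [AddCircle.coe_add, coe_int_addCircle, add_zero]
  exact Dense.mono himg ((hΨs.denseRange).dense_image hΨc hG3dense)
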